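/- In Minkowski space M^{1,n} (n ≥ 1), a Killing vector field ζ(x) = z + F(x), where z is a constant vector and F a skew-symmetric endomorphism, has a zero at a point x if and only if z + F(x) = 0. If F has the form F = k ⊗ w♭ − w ⊗ k♭ with k null and nonzero, w spacelike, orthogonal to and linearly independent of k, and z = A k + ⟨k,z'⟩ w for constants A ∈ ℝ and z' ∈ M^{1,n}, then the restriction of ζ to the hyperplane z' + k⊥ equals (A + ⟨w,x⟩) k, and its zero set within this hyperplane is the affine codimension-two plane −A⟨w,w⟩^{-1} w + span(k,w)⊥ translated appropriately; in particular ζ is null and tangent to z' + k⊥ and vanishes exactly where A + ⟨w,x⟩ = 0. -/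

import Mathlib

/-- Theorem 6.3 (Minkowski, degenerate case computations): for the Killing field
ζ(x) = z + F(x) with F = k ⊗ w♭ − w ⊗ k♭ (k null nonzero, w spacelike, orthogonal to and
independent of k) and z = A k + ⟨k,z'⟩ w, on the hyperplane z' + k⊥ one has
ζ(x) = (A + ⟨w,x⟩) k; in particular ζ is null there and vanishes exactly where
A + ⟨w,x⟩ = 0. Moreover ζ(x) = 0 iff z + F(x) = 0 by definition. -/
theorem minkowski_degenerate_killing_on_hyperplane
    (n : ℕ) (hn : 1 ≤ n) (V : Type*) [AddCommGroup V] [Module ℝ V]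
    (B : V →ₗ[ℝ] V →ₗ[ℝ] ℝ)
    (b : Module.Basis (Fin 1 ⊕ Fin n) ℝ V)
    (hb : ∀ i j, B (b i) (b j) =
      if i = j then Sum.elim (fun _ => (-1 : ℝ)) (fun _ => (1 : ℝ)) i else 0)
    (k w z' : V) (A : ℝ)
    (hk0 : k ≠ 0) (hknull : B k k = 0)
    (hwspace : 0 < B w w) (horth : B k w = 0)
    (hind : LinearIndependent ℝ ![k, w]) :
    ∀ x : V, B k (x - z') = 0 →
      ((A • k + (B k z') • w) + (B w x • k - B k x • w) = (A + B w x) • k) ∧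
      B ((A • k + (B k z') • w) + (B w x • k - B k x • w))
        ((A • k + (B k z') • w) + (B w x • k - B k x • w)) = 0 ∧
      ((A • k + (B k z') • w) + (B w x • k - B k x • w) = 0 ↔ A + B w x = 0) := by
  intro x hx
  have hkx : B k x = B k z' := by
    have := hx
    rw [map_sub] at this
    linarith
  have heq : (A • k + (B k z') • w) + (B w x • k - B k x • w) = (A + B w x) • k := by
    rw [hkx, add_smul]
    abel
  refine ⟨heq, ?_, ?_⟩
  · rw [heq]
    simp [hknull]
  · rw [heq]
    constructor
    · intro h
      rcases smul_eq_zero.mp h with h | h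
      · exact h
      · exact absurd h hk0
    · intro h; rw [h, zero_smul]
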